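/- Let X be a complex Banach space and T a quasi-compact bounded linear operator on X with r(T) ≥ 1 such that sup_{n ∈ ℕ} r(T)^{-n}‖T^n‖ < ∞. Then for every peripheral eigenvalue λ of T (i.e., λ is an eigenvalue with |λ| = r(T)), the operator T − λI has ascent one: ker((T − λI)²) = ker(T − λI). -/

import Mathlib

/-- A bounded operator `T` on a Banach space is *quasi-compact* if some power `T ^ m` (with
`m > 0`) is within distance `< 1` (in operator norm) of a compact operator. -/
def IsQuasiCompact {X : Type*} [NormedAddCommGroup X] [NormedSpace ℂ X]
    (T : X →L[ℂ] X) : Prop :=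
  ∃ m : ℕ, 0 < m ∧ ∃ K : X →L[ℂ] X, IsCompactOperator K ∧ ‖T ^ m - K‖ < 1

/-- Let `T` be a quasi-compact operator on a complex Banach space with
`r(T) ≥ 1` and `sup_n r(T)^{-n} ‖T^n‖ < ∞`.  Then for every peripheral eigenvalue `λ`
(an eigenvalue with `|λ| = r(T)`) the operator `T - λI` has ascent one:
`ker (T - λI)² = ker (T - λI)`. -/
theorem peripheral_eigenvalue_ascent_one
    {X : Type*} [NormedAddCommGroup X] [NormedSpace ℂ X] [CompleteSpace X]
    (T : X →L[ℂ] X) (hqc : IsQuasiCompact T)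
    (hr : 1 ≤ spectralRadius ℂ T)
    (hbound : ∃ B : ℝ, ∀ n : ℕ, ‖T ^ n‖ ≤ B * (spectralRadius ℂ T).toReal ^ n) :
    ∀ l : ℂ, LinearMap.ker ((T - l • 1 : X →L[ℂ] X) : X →ₗ[ℂ] X) ≠ ⊥ → (‖l‖₊ : ENNReal) = spectralRadius ℂ T →
      LinearMap.ker (((T - l • 1) ^ 2 : X →L[ℂ] X) : X →ₗ[ℂ] X) = LinearMap.ker ((T - l • 1 : X →L[ℂ] X) : X →ₗ[ℂ] X) := by
  intro l _hker hl
  have hrl : (spectralRadius ℂ T).toReal = ‖l‖ := by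
    rw [← hl]; simp
  have hl1 : (1 : ℝ) ≤ ‖l‖ := by
    rw [← hl] at hr
    exact_mod_cast hr
  have hlpos : (0 : ℝ) < ‖l‖ := lt_of_lt_of_le one_pos hl1
  obtain ⟨B, hB⟩ := hbound
  rw [hrl] at hB
  apply le_antisymm
  · intro x hx
    have hx2 : (T - l • 1) ((T - l • 1) x) = 0 := by
      have h := hx
      rw [LinearMap.mem_ker] at h
      simpa [pow_two, ContinuousLinearMap.mul_apply] using h
    set y := (T - l • 1) x with hy
    have hTy : T y = l • y := by
      have h : T y - l • y = 0 := by
        simpa [ContinuousLinearMap.sub_apply, ContinuousLinearMap.smul_apply] using hx2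
      rw [sub_eq_zero] at h; exact h
    have hTx : T x = l • x + y := by
      have h : y = T x - l • x := by
        simp [hy, ContinuousLinearMap.sub_apply, ContinuousLinearMap.smul_apply]
      rw [h]; abel
    -- key formula : T^(n+1) x = l^(n+1) • x + ((n+1) * l^n) • y
    have key : ∀ n : ℕ, (T ^ (n + 1)) x
        = l ^ (n + 1) • x + ((((n : ℂ)) + 1) * l ^ n) • y := by
      intro n
      induction n with
      | zero => simpa using hTx
      | succ n ih =>
        rw [pow_succ', ContinuousLinearMap.mul_apply, ih]
        rw [map_add, map_smul, map_smul, hTx, hTy]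
        push_cast
        module
    -- derive the linear growth bound
    have hnorm : ∀ n : ℕ, ((n : ℝ) + 1) * ‖y‖ ≤ (B + 1) * ‖x‖ * ‖l‖ := by
      intro n
      have hpow : (0 : ℝ) < ‖l‖ ^ n := pow_pos hlpos n
      have h1 : ‖(T ^ (n + 1)) x‖ ≤ B * ‖l‖ ^ (n + 1) * ‖x‖ := by
        calc ‖(T ^ (n + 1)) x‖ ≤ ‖T ^ (n + 1)‖ * ‖x‖ := (T ^ (n + 1)).le_opNorm x
          _ ≤ B * ‖l‖ ^ (n + 1) * ‖x‖ :=
            mul_le_mul_of_nonneg_right (hB (n + 1)) (norm_nonneg x)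
      have h2 : ((n : ℝ) + 1) * ‖l‖ ^ n * ‖y‖
          ≤ ‖(T ^ (n + 1)) x‖ + ‖l‖ ^ (n + 1) * ‖x‖ := by
        have htri : ‖((((n : ℂ)) + 1) * l ^ n) • y‖
            ≤ ‖(T ^ (n + 1)) x‖ + ‖l ^ (n + 1) • x‖ := by
          calc ‖((((n : ℂ)) + 1) * l ^ n) • y‖
              = ‖(l ^ (n + 1) • x + ((((n : ℂ)) + 1) * l ^ n) • y) - l ^ (n + 1) • x‖ := by
                rw [add_sub_cancel_left]
            _ ≤ ‖l ^ (n + 1) • x + ((((n : ℂ)) + 1) * l ^ n) • y‖ + ‖l ^ (n + 1) • x‖ :=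
                norm_sub_le _ _
            _ = ‖(T ^ (n + 1)) x‖ + ‖l ^ (n + 1) • x‖ := by rw [← key n]
        have hc : ‖((((n : ℂ)) + 1) * l ^ n) • y‖ = ((n : ℝ) + 1) * ‖l‖ ^ n * ‖y‖ := by
          rw [norm_smul, norm_mul, norm_pow]
          have : ‖((n : ℂ)) + 1‖ = (n : ℝ) + 1 := by
            have : ((n : ℂ)) + 1 = ((n + 1 : ℕ) : ℂ) := by push_cast; ring
            rw [this, Complex.norm_natCast]; push_cast; ring
          rw [this]
        have hx' : ‖l ^ (n + 1) • x‖ = ‖l‖ ^ (n + 1) * ‖x‖ := by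
          rw [norm_smul, norm_pow]
        rw [hc, hx'] at htri
        exact htri
      have h3 : ((n : ℝ) + 1) * ‖l‖ ^ n * ‖y‖
          ≤ (B + 1) * ‖x‖ * ‖l‖ * ‖l‖ ^ n := by
        rw [pow_succ] at h1 h2
        ring_nf at h1 h2 ⊢
        linarith [h1, h2]
      have := (mul_le_mul_iff_of_pos_right hpow).mp (by linarith [h3] : ((n : ℝ) + 1) * ‖y‖ * ‖l‖ ^ n
          ≤ (B + 1) * ‖x‖ * ‖l‖ * ‖l‖ ^ n)
      exact this
    -- conclude y = 0
    have hy0 : y = 0 := by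
      by_contra hne
      have hypos : 0 < ‖y‖ := norm_pos_iff.mpr hne
      obtain ⟨n, hn⟩ := exists_nat_gt ((B + 1) * ‖x‖ * ‖l‖ / ‖y‖)
      have h := hnorm n
      rw [div_lt_iff₀ hypos] at hn
      nlinarith [h, hn, hypos]
    rw [LinearMap.mem_ker]
    exact hy0
  · intro x hx
    rw [LinearMap.mem_ker] at hx ⊢
    simp only [ContinuousLinearMap.coe_coe] at hx ⊢
    simp [pow_two, ContinuousLinearMap.mul_apply, hx]
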